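/- Let s ≥ 2 and a ≥ 2 be integers, let N ∈ ℕ, and let a′ ∈ ℕ with a′ < a. Then for every ξ ∈ ℤ, |𝔄(ξ; N, s, a)| ≤ s^{a−a′}/N + ∏_{k=a′+1}^{a} |g(ξ, k; s, {0,1,…,s−1})|. -/

import Mathlib

open Finset

/-- `e(y) = exp(-2πi y)`. -/
noncomputable def eneg (y : ℝ) : ℂ := Complex.exp (-(2 * Real.pi * Complex.I * (y : ℂ)))

/-- `1̂(θ) = ∫₀¹ e(xθ) dx`. -/
noncomputable def oneHat (θ : ℝ) : ℂ := ∫ x in (0:ℝ)..1, eneg (x * θ)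

/-- The `j`-th base-`s` digit of the natural number `n`. -/
def digitOf (s n j : ℕ) : ℕ := n / s ^ j % s

/-- `𝔄(ξ; N, s, a) = N⁻¹ Σ_{k<N} e(ξ k s^{-a})`. -/
noncomputable def Afun (N s a : ℕ) (ξ : ℤ) : ℂ :=
  (N : ℂ)⁻¹ * ∑ k ∈ Finset.range N, eneg ((ξ : ℝ) * k / (s : ℝ) ^ a)

/-- `ℭ(ξ) = s^{a-b} Σ_{ℓ < s^{b-a}} e(ξ ℓ s^{-b})`. -/
noncomputable def Cfun (s a b : ℕ) (ξ : ℤ) : ℂ :=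
  (((s : ℝ) ^ a / (s : ℝ) ^ b : ℝ) : ℂ) *
    ∑ ℓ ∈ Finset.range (s ^ (b - a)), eneg ((ξ : ℝ) * ℓ / (s : ℝ) ^ b)

/-- `𝕃*`: the set of `ℓ < s^{b-a}` all of whose `b-a` base-`s` digits lie in `D`. -/
def Lstar (s a b : ℕ) (D : Finset ℕ) : Finset ℕ :=
  (Finset.range (s ^ (b - a))).filter fun ℓ => ∀ j < b - a, digitOf s ℓ j ∈ D

/-- `𝔅*(ξ) = r^{a-b} Σ_{ℓ ∈ 𝕃*} e(ξ ℓ s^{-b})`, where `r = #D`. -/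
noncomputable def Bstar (s a b : ℕ) (D : Finset ℕ) (ξ : ℤ) : ℂ :=
  (((D.card : ℝ) ^ a / (D.card : ℝ) ^ b : ℝ) : ℂ) *
    ∑ ℓ ∈ Lstar s a b D, eneg ((ξ : ℝ) * ℓ / (s : ℝ) ^ b)

/-- `g(ξ, k; s, 𝒜) = (#𝒜)⁻¹ Σ_{d ∈ 𝒜} e(ξ d s^{-k})`. -/
noncomputable def gfun (s : ℕ) (A : Finset ℕ) (ξ : ℤ) (k : ℕ) : ℂ :=
  (A.card : ℂ)⁻¹ * ∑ d ∈ A, eneg ((ξ : ℝ) * d / (s : ℝ) ^ k)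

lemma eneg_add (x y : ℝ) : eneg (x + y) = eneg x * eneg y := by
  rw [eneg, eneg, eneg, ← Complex.exp_add]
  push_cast
  ring_nf

lemma norm_eneg (x : ℝ) : ‖eneg x‖ = 1 := by
  simp [eneg, Complex.norm_exp]

lemma sum_range_mul_sum {M : Type*} [AddCommMonoid M] (f : ℕ → M) (m n : ℕ) :
    ∑ k ∈ Finset.range (m * n), f k
      = ∑ i ∈ Finset.range m, ∑ j ∈ Finset.range n, f (i * n + j) := by
  induction m with
  | zero => simp
  | succ m ih =>
    rw [Nat.succ_mul, Finset.sum_range_add, ih, Finset.sum_range_succ]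

lemma prod_g_eq (s a : ℕ) (hs : 2 ≤ s) (ξ : ℤ) :
    ∀ m ≤ a, ∏ k ∈ Finset.Icc (a - m + 1) a, gfun s (Finset.range s) ξ k
      = ((s : ℂ) ^ m)⁻¹ * ∑ ℓ ∈ Finset.range (s ^ m), eneg ((ξ : ℝ) * ℓ / (s : ℝ) ^ a) := by
  have hs0 : (0:ℝ) < s := by positivity
  intro m
  induction m with
  | zero =>
    intro _
    simp [eneg]
  | succ m ih =>
    intro hma
    have hm : m ≤ a := le_of_lt (Nat.lt_of_lt_of_le (Nat.lt_succ_self m) hma)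
    have h1 : a - (m + 1) + 1 = a - m := by omega
    have h2 : a - m ≤ a := Nat.sub_le a m
    rw [h1]
    have hIcc : Finset.Icc (a - m) a = insert (a - m) (Finset.Icc (a - m + 1) a) := by
      rw [Finset.Icc_add_one_left_eq_Ioc, Finset.Ioc_insert_left h2]
    rw [hIcc, Finset.prod_insert (by simp [Finset.Icc_add_one_left_eq_Ioc]), ih hm]
    rw [gfun]
    simp only [Finset.card_range]
    -- rewrite eneg (ξ d / s^(a-m)) as eneg (ξ (d * s^m) / s^a)
    have key : ∀ d : ℕ, eneg ((ξ : ℝ) * d / (s : ℝ) ^ (a - m))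
        = eneg ((ξ : ℝ) * (d * s ^ m) / (s : ℝ) ^ a) := by
      intro d
      congr 1
      have : (s : ℝ) ^ a = (s : ℝ) ^ (a - m) * (s : ℝ) ^ m := by
        rw [← pow_add]; congr 1; omega
      rw [this]
      field_simp
    have expand : (∑ d ∈ Finset.range s, eneg ((ξ : ℝ) * d / (s : ℝ) ^ (a - m))) *
        (∑ ℓ ∈ Finset.range (s ^ m), eneg ((ξ : ℝ) * ℓ / (s : ℝ) ^ a))
        = ∑ ℓ ∈ Finset.range (s ^ (m + 1)), eneg ((ξ : ℝ) * ℓ / (s : ℝ) ^ a) := by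
      rw [pow_succ']
      rw [sum_range_mul_sum (fun k => eneg ((ξ : ℝ) * k / (s : ℝ) ^ a)) s (s ^ m)]
      rw [Finset.sum_mul]
      refine Finset.sum_congr rfl fun d _ => ?_
      rw [Finset.mul_sum]
      refine Finset.sum_congr rfl fun ℓ _ => ?_
      rw [key d, ← eneg_add]
      congr 1
      push_cast
      ring
    rw [← expand]
    rw [pow_succ]
    rw [mul_inv]
    ring
/-- Lemma 11.3 (Pramanik–Zhang): for any `1 ≤ a′ < a`,
`|𝔄(ξ; N, s, a)| ≤ s^{a−a′}/N + ∏_{k=a′+1}^{a} |g(ξ, k; s, ℤ_s)|`. -/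
theorem Afun_digit_product_estimate (s a N a' : ℕ)
    (hs : 2 ≤ s) (ha : 2 ≤ a) (hN : 0 < N) (ha'1 : 1 ≤ a') (ha' : a' < a) (ξ : ℤ) :
    ‖Afun N s a ξ‖ ≤
      (s : ℝ) ^ (a - a') / N +
        ∏ k ∈ Finset.Icc (a' + 1) a, ‖gfun s (Finset.range s) ξ k‖ := by
  set M := s ^ (a - a') with hM
  have hM0 : 0 < M := Nat.pow_pos (by omega)
  set S := ∑ ℓ ∈ Finset.range M, eneg ((ξ : ℝ) * ℓ / (s : ℝ) ^ a) with hS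
  have hprod : ∏ k ∈ Finset.Icc (a' + 1) a, ‖gfun s (Finset.range s) ξ k‖ = ‖S‖ / M := by
    rw [← norm_prod]
    have := prod_g_eq s a hs ξ (a - a') (Nat.sub_le a a')
    rw [show a - (a - a') = a' by omega] at this
    rw [this ]
    rw [norm_mul, norm_inv, norm_pow, Complex.norm_natCast]
    rw [← Nat.cast_pow, ← hM]
    rw [div_eq_inv_mul]
  set q := N / M with hq
  set r := N % M with hr
  have hNqr : q * M + r = N := by rw [mul_comm]; exact Nat.div_add_mod N M
  have hbound : ‖∑ k ∈ Finset.range N, eneg ((ξ : ℝ) * k / (s : ℝ) ^ a)‖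
      ≤ q * ‖S‖ + r := by
    rw [← hNqr, Finset.sum_range_add]
    refine (norm_add_le _ _).trans ?_
    gcongr
    · rw [sum_range_mul_sum]
      refine (norm_sum_le _ _).trans ?_
      have : ∀ i ∈ Finset.range q,
          ‖∑ j ∈ Finset.range M, eneg ((ξ : ℝ) * ↑(i * M + j) / (s : ℝ) ^ a)‖ = ‖S‖ := by
        intro i _
        have : ∀ j : ℕ, eneg ((ξ : ℝ) * ↑(i * M + j) / (s : ℝ) ^ a)
            = eneg ((ξ : ℝ) * ↑(i * M) / (s : ℝ) ^ a) * eneg ((ξ : ℝ) * j / (s : ℝ) ^ a) := by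
          intro j
          rw [← eneg_add]
          congr 1
          push_cast
          ring
        simp only [this, ← Finset.mul_sum, norm_mul, norm_eneg, one_mul, hS]
      rw [Finset.sum_congr rfl this, Finset.sum_const, Finset.card_range, nsmul_eq_mul]
    · refine (norm_sum_le _ _).trans ?_
      simp only [norm_eneg, Finset.sum_const, Finset.card_range, nsmul_eq_mul, mul_one]
      exact le_refl _
  have hnormA : ‖Afun N s a ξ‖
      = ‖∑ k ∈ Finset.range N, eneg ((ξ : ℝ) * k / (s : ℝ) ^ a)‖ / N := by
    rw [Afun, norm_mul, norm_inv, Complex.norm_natCast, div_eq_inv_mul]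
  rw [hnormA, hprod]
  have hMcast : (s : ℝ) ^ (a - a') = (M : ℝ) := by rw [hM]; push_cast; ring
  rw [hMcast]
  have hNpos : (0:ℝ) < N := by exact_mod_cast hN
  have hMpos : (0:ℝ) < M := by exact_mod_cast hM0
  have hqM : (q : ℝ) * M ≤ N := by exact_mod_cast (Nat.div_mul_le_self N M)
  have hrM : (r : ℝ) ≤ M := by
    exact_mod_cast (Nat.mod_lt N hM0).le
  have hS0 : (0:ℝ) ≤ ‖S‖ := norm_nonneg _
  calc ‖∑ k ∈ Finset.range N, eneg ((ξ : ℝ) * k / (s : ℝ) ^ a)‖ / N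
      ≤ ((q : ℝ) * ‖S‖ + r) / N := by gcongr
    _ ≤ (M : ℝ) / N + ‖S‖ / M := by
        have h1 : (q:ℝ) * ‖S‖ / N ≤ ‖S‖ / M := by
          rw [div_le_div_iff₀ hNpos hMpos]; nlinarith
        have h2 : (r:ℝ) / N ≤ (M:ℝ) / N := by gcongr
        rw [add_div]; linarith
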